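/- Let X be a real (or complex) Banach space, ω > 0, and φ : ℝ → ℝ a twice continuously differentiable function with φ(0) = 1 and φ'(0) = −1. Let u : ℝ → X be a twice continuously differentiable curve on [0, ∞) (playing the role of the semigroup orbit u(t) = e^{tA}f, so that u'(t) = e^{tA}Af and u''(t) = e^{tA}A²f) such that for all t ≥ 0 one has ‖u(t)‖ ≤ φ(ωt)·‖u(0)‖ and ‖u''(t)‖ ≤ φ''(ωt)·‖u''(0)‖. Then, setting a = ‖u(0)‖, b = ‖u'(0)‖/ω and c = ‖u''(0)‖/ω², the dynamical inequality φ(s)·(a + c) + s·(c − b) + (a − c) ≥ 0 holds for every s ≥ 0. -/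

import Mathlib

open Set intervalIntegral

/-- Inequality (1.5) of Theorem 1.1: the dynamical inequality for a C² orbit
with weight function φ normalised by φ(0) = 1, φ'(0) = −1. -/
theorem landau_kato_dynamical_inequality
    {X : Type*} [NormedAddCommGroup X] [NormedSpace ℝ X] [CompleteSpace X]
    (ω : ℝ) (hω : 0 < ω)
    (φ : ℝ → ℝ) (hφ : ContDiff ℝ 2 φ) (hφ0 : φ 0 = 1) (hφ'0 : deriv φ 0 = -1)
    (u u' u'' : ℝ → X)
    (hu : ∀ t ∈ Set.Ici (0:ℝ), HasDerivWithinAt u (u' t) (Set.Ici 0) t)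
    (hu' : ∀ t ∈ Set.Ici (0:ℝ), HasDerivWithinAt u' (u'' t) (Set.Ici 0) t)
    (hu'' : ContinuousOn u'' (Set.Ici 0))
    (hbound : ∀ t ≥ (0:ℝ), ‖u t‖ ≤ φ (ω * t) * ‖u 0‖)
    (hbound'' : ∀ t ≥ (0:ℝ), ‖u'' t‖ ≤ deriv (deriv φ) (ω * t) * ‖u'' 0‖) :
    ∀ s ≥ (0:ℝ),
      φ s * (‖u 0‖ + ‖u'' 0‖ / ω ^ 2) + s * (‖u'' 0‖ / ω ^ 2 - ‖u' 0‖ / ω)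
        + (‖u 0‖ - ‖u'' 0‖ / ω ^ 2) ≥ 0 := by
  -- regularity of φ
  have h2 : (2 : ℕ∞) = 1 + 1 := by norm_num
  have hφ1 : ContDiff ℝ 1 (deriv φ) := by
    have hφ2 : ContDiff ℝ ((1:ℕ) + 1) φ := by exact_mod_cast hφ
    rw [contDiff_succ_iff_deriv] at hφ2
    exact hφ2.2.2
  have hdφ : Differentiable ℝ φ := hφ.differentiable (by norm_num)
  have hdφ' : Differentiable ℝ (deriv φ) := hφ1.differentiable (by norm_num)
  have hcφ'' : Continuous (deriv (deriv φ)) := by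
    have hφ2 : ContDiff ℝ ((0:ℕ) + 1) (deriv φ) := by exact_mod_cast hφ1
    rw [contDiff_succ_iff_deriv] at hφ2
    exact hφ2.2.2.continuous
  intro s hs
  set t := s / ω with ht_def
  have ht : 0 ≤ t := div_nonneg hs hω.le
  have hst : ω * t = s := by rw [ht_def]; field_simp
  have hcu : ContinuousOn u (Ici 0) := fun x hx => (hu x hx).continuousWithinAt
  have hcu' : ContinuousOn u' (Ici 0) := fun x hx => (hu' x hx).continuousWithinAt
  -- Step 1: Taylor identity
  have hIccIci : Icc (0:ℝ) t ⊆ Ici 0 := Icc_subset_Ici_self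
  have hintX : IntervalIntegrable (fun τ => (t - τ) • u'' τ) MeasureTheory.volume 0 t := by
    apply ContinuousOn.intervalIntegrable
    rw [uIcc_of_le ht]
    exact (continuousOn_const.sub continuousOn_id).smul (hu''.mono hIccIci)
  have key : (∫ τ in (0:ℝ)..t, (t - τ) • u'' τ) = u t - (u 0 + t • u' 0) := by
    have h := intervalIntegral.integral_eq_sub_of_hasDeriv_right_of_le ht
      (f := fun τ => u τ + (t - τ) • u' τ)
      (f' := fun τ => (t - τ) • u'' τ)
      (by
        apply ContinuousOn.add (hcu.mono hIccIci)
        exact (continuousOn_const.sub continuousOn_id).smul (hcu'.mono hIccIci))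
      (by
        intro τ hτ
        have hτ0 : (0:ℝ) < τ := hτ.1
        have hmem : Ici (0:ℝ) ∈ nhds τ := Ici_mem_nhds hτ0
        have h1 : HasDerivAt u (u' τ) τ := (hu τ hτ0.le).hasDerivAt hmem
        have h2 : HasDerivAt u' (u'' τ) τ := (hu' τ hτ0.le).hasDerivAt hmem
        have hc : HasDerivAt (fun τ : ℝ => t - τ) (-1) τ := by
          simpa using (hasDerivAt_id' τ).const_sub t
        have := h1.add (hc.smul h2)
        convert this.hasDerivWithinAt using 1
        · rfl
        module)
      hintX
    simp only [sub_self, zero_smul, add_zero, sub_zero] at h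
    rw [h]
  -- Step 2: the φ integral
  have keyφ : (∫ τ in (0:ℝ)..t, (t - τ) * deriv (deriv φ) (ω * τ))
      = (φ (ω * t) - 1) / ω ^ 2 + t / ω := by
    have h := intervalIntegral.integral_eq_sub_of_hasDerivAt (a := 0) (b := t)
      (f := fun τ => (1 / ω ^ 2) * φ (ω * τ) + ((t - τ) / ω) * deriv φ (ω * τ))
      (f' := fun τ => (t - τ) * deriv (deriv φ) (ω * τ))
      (by
        intro τ _
        have hlin : HasDerivAt (fun τ : ℝ => ω * τ) ω τ := by
          simpa using (hasDerivAt_id τ).const_mul ω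
        have h1 : HasDerivAt (fun τ : ℝ => φ (ω * τ)) (deriv φ (ω * τ) * ω) τ :=
          (hdφ (ω * τ)).hasDerivAt.comp τ hlin
        have h2 : HasDerivAt (fun τ : ℝ => deriv φ (ω * τ)) (deriv (deriv φ) (ω * τ) * ω) τ :=
          (hdφ' (ω * τ)).hasDerivAt.comp τ hlin
        have hc : HasDerivAt (fun τ : ℝ => (t - τ) / ω) (-1 / ω) τ := by
          simpa using ((hasDerivAt_const τ t).sub (hasDerivAt_id τ)).div_const ω
        have := (h1.const_mul (1 / ω ^ 2)).add (hc.mul h2)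
        convert this using 1
        · rfl
        field_simp
        ring)
      (by
        apply ContinuousOn.intervalIntegrable
        exact (continuousOn_const.sub continuousOn_id).mul
          (hcφ''.comp (continuous_const.mul continuous_id)).continuousOn)
    rw [h]
    simp only [mul_zero, sub_zero, hφ0, hφ'0]
    field_simp
    ring
  -- Step 3: norm bound on the remainder
  have hrem : ‖∫ τ in (0:ℝ)..t, (t - τ) • u'' τ‖
      ≤ ((φ (ω * t) - 1) / ω ^ 2 + t / ω) * ‖u'' 0‖ := by
    calc ‖∫ τ in (0:ℝ)..t, (t - τ) • u'' τ‖
        ≤ ∫ τ in (0:ℝ)..t, ‖(t - τ) • u'' τ‖ :=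
          intervalIntegral.norm_integral_le_integral_norm ht
      _ ≤ ∫ τ in (0:ℝ)..t, (t - τ) * deriv (deriv φ) (ω * τ) * ‖u'' 0‖ := by
          apply intervalIntegral.integral_mono_on ht
          · exact hintX.norm
          · apply ContinuousOn.intervalIntegrable
            rw [uIcc_of_le ht]
            exact ((continuousOn_const.sub continuousOn_id).mul
              ((hcφ''.comp (continuous_const.mul continuous_id)).continuousOn)).mul
              continuousOn_const
          · intro τ hτ
            rw [norm_smul, Real.norm_eq_abs, abs_of_nonneg (sub_nonneg.mpr hτ.2), mul_assoc]
            exact mul_le_mul_of_nonneg_left (hbound'' τ hτ.1) (sub_nonneg.mpr hτ.2)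
      _ = ((φ (ω * t) - 1) / ω ^ 2 + t / ω) * ‖u'' 0‖ := by
          rw [← keyφ, ← intervalIntegral.integral_mul_const]
  -- Step 4: combine
  have hts : t • u' 0 = u t - u 0 - (∫ τ in (0:ℝ)..t, (t - τ) • u'' τ) := by
    rw [key]; abel
  have hmain : t * ‖u' 0‖ ≤ φ (ω * t) * ‖u 0‖ + ‖u 0‖
      + (((φ (ω * t) - 1) / ω ^ 2 + t / ω) * ‖u'' 0‖) := by
    have : ‖t • u' 0‖ ≤ ‖u t‖ + ‖u 0‖ + ‖∫ τ in (0:ℝ)..t, (t - τ) • u'' τ‖ := by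
      rw [hts]
      calc ‖u t - u 0 - (∫ τ in (0:ℝ)..t, (t - τ) • u'' τ)‖
          ≤ ‖u t - u 0‖ + ‖∫ τ in (0:ℝ)..t, (t - τ) • u'' τ‖ := norm_sub_le _ _
        _ ≤ ‖u t‖ + ‖u 0‖ + ‖∫ τ in (0:ℝ)..t, (t - τ) • u'' τ‖ := by
            gcongr; exact norm_sub_le _ _
    rw [norm_smul, Real.norm_eq_abs, abs_of_nonneg ht] at this
    calc t * ‖u' 0‖ ≤ ‖u t‖ + ‖u 0‖ + ‖∫ τ in (0:ℝ)..t, (t - τ) • u'' τ‖ := this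
      _ ≤ φ (ω * t) * ‖u 0‖ + ‖u 0‖ + (((φ (ω * t) - 1) / ω ^ 2 + t / ω) * ‖u'' 0‖) := by
          gcongr
          exact hbound t ht
  rw [hst] at hmain
  have hω2 : (0:ℝ) < ω ^ 2 := by positivity
  have htω : t = s / ω := ht_def
  rw [htω] at hmain
  have e1 : s / ω * ‖u' 0‖ = s * (‖u' 0‖ / ω) := by ring
  have e2 : ((φ s - 1) / ω ^ 2 + s / ω / ω) * ‖u'' 0‖
      = φ s * (‖u'' 0‖ / ω ^ 2) + s * (‖u'' 0‖ / ω ^ 2) - ‖u'' 0‖ / ω ^ 2 := by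
    field_simp
    ring
  rw [e1, e2] at hmain
  linarith
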